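/- arXiv:2405.10580 — 3 statements merged into one kernel-verified Lean document; each statement's English description precedes it below -/
import Mathlib

section
/- Let M(N) → ∞ as N → ∞, let τ_c(N) = 1/(M(N)^{1/N} − 1), fix ξ ∈ ℝ, and set τ_N = τ_c(N)·(1 + ξ(1+τ_c(N))/N). Then p_{M}(τ_N) := 1 − (1 − (τ_N/(1+τ_N))^N)^{M(N)} converges to 1 − exp(−e^ξ) as N → ∞. -/
open Filter Real

lemma aux_log1p : Tendsto (fun x : ℝ => Real.log (1 + x) / x) (nhdsWithin 0 {(0:ℝ)}ᶜ) (nhds 1) := by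
  have h1 : HasDerivAt (fun x : ℝ => 1 + x) 1 0 := by
    simpa using (hasDerivAt_id (0:ℝ)).const_add (1:ℝ)
  have h : HasDerivAt (fun x : ℝ => Real.log (1 + x)) 1 0 := by
    have h2 := (Real.hasDerivAt_log (by norm_num : (1:ℝ) + 0 ≠ 0)).comp 0 h1
    simpa [Function.comp_def] using h2
  have ht := hasDerivAt_iff_tendsto_slope.mp h
  refine ht.congr' ?_
  filter_upwards [self_mem_nhdsWithin] with x hx
  simp [slope_def_field, Real.log_one]

lemma aux_log1m : Tendsto (fun x : ℝ => Real.log (1 - x) / x) (nhdsWithin 0 {(0:ℝ)}ᶜ) (nhds (-1)) := by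
  have h1 : HasDerivAt (fun x : ℝ => 1 - x) (-1) 0 := by
    simpa using (hasDerivAt_id (0:ℝ)).const_sub (1:ℝ)
  have h : HasDerivAt (fun x : ℝ => Real.log (1 - x)) (-1) 0 := by
    have h2 := (Real.hasDerivAt_log (by norm_num : (1:ℝ) - 0 ≠ 0)).comp 0 h1
    simpa [Function.comp_def] using h2
  have ht := hasDerivAt_iff_tendsto_slope.mp h
  refine ht.congr' ?_
  filter_upwards [self_mem_nhdsWithin] with x hx
  simp [slope_def_field, Real.log_one]

noncomputable def tcf (M : ℕ → ℝ) (N : ℕ) : ℝ := 1 / ((M N) ^ ((1 : ℝ) / N) - 1)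
noncomputable def ttf (M : ℕ → ℝ) (ξ : ℝ) (N : ℕ) : ℝ :=
  tcf M N * (1 + ξ * (1 + tcf M N) / N)
noncomputable def wf (M : ℕ → ℝ) (ξ : ℝ) (N : ℕ) : ℝ := ξ / ((N:ℝ) + ξ * tcf M N)
noncomputable def qf (M : ℕ → ℝ) (ξ : ℝ) (N : ℕ) : ℝ :=
  (ttf M ξ N / (1 + ttf M ξ N)) ^ N


lemma aux_alg (c x n w e : ℝ) (hc : 0 < c) (hn : 0 < n) (hd : 0 < n + x*c)
    (hE : 0 < 1 + x*(1+c)/n) (hD : 0 < 1 + x*c/n)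
    (hce : c * (e - 1) = 1) (hw : w = x/(n + x*c)) :
    (c*(1 + x*(1+c)/n)) / (1 + c*(1 + x*(1+c)/n)) = (1/e) * (1 + w) := by
  have hcne : c ≠ 0 := ne_of_gt hc
  have h1c : (0:ℝ) < 1 + c := by linarith
  have he : e = (1+c)/c := by
    field_simp
    nlinarith [hce]
  have hτ : 0 < 1 + c*(1 + x*(1+c)/n) := by nlinarith [mul_pos hc hE]
  have hτne : 1 + c*(1 + x*(1+c)/n) ≠ 0 := ne_of_gt hτ
  have hnne : n ≠ 0 := ne_of_gt hn
  have hdne : n + x*c ≠ 0 := ne_of_gt hd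
  have h1cne : (1:ℝ) + c ≠ 0 := ne_of_gt h1c
  have hDne : 1 + x*c/n ≠ 0 := ne_of_gt hD
  have step3 : (c*(1 + x*(1+c)/n)) / (1 + c*(1 + x*(1+c)/n))
      = (c/(1+c)) * ((1 + x*(1+c)/n)/(1 + x*c/n)) := by
    rw [div_mul_div_comm, div_eq_div_iff hτne (mul_ne_zero h1cne hDne)]
    ring
  have step2 : (1 + x*(1+c)/n)/(1 + x*c/n) = 1 + x/(n+x*c) := by
    rw [div_eq_iff hDne]
    field_simp
    ring
  rw [hw, step3, step2, he, one_div_div]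

theorem stmt_7 (M : ℕ → ℝ) (hM : ∀ N, 1 < M N)
    (hMtop : Filter.Tendsto M Filter.atTop Filter.atTop) (ξ : ℝ) :
    Filter.Tendsto
      (fun N : ℕ =>
        let τc : ℝ := 1 / ((M N) ^ ((1 : ℝ) / N) - 1)
        let τ : ℝ := τc * (1 + ξ * (1 + τc) / N)
        1 - (1 - (τ / (1 + τ)) ^ N) ^ (M N))
      Filter.atTop (nhds (1 - Real.exp (-Real.exp ξ))) := by
  have hM0 : ∀ N, (0:ℝ) < M N := fun N => lt_trans one_pos (hM N)
  have hMne : ∀ N, M N ≠ 0 := fun N => ne_of_gt (hM0 N)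
  have hLpos : ∀ N, 0 < Real.log (M N) := fun N => Real.log_pos (hM N)
  have hLtop : Tendsto (fun N => Real.log (M N)) atTop atTop :=
    Real.tendsto_log_atTop.comp hMtop
  have ha : ∀ N : ℕ, 1 ≤ N →
      (M N) ^ ((1:ℝ)/(N:ℝ)) = Real.exp (Real.log (M N) / (N:ℝ)) := by
    intro N hN
    rw [Real.rpow_def_of_pos (hM0 N), mul_one_div]
  have hNpos : ∀ N : ℕ, 1 ≤ N → (0:ℝ) < (N:ℝ) := fun N hN => Nat.cast_pos.mpr hN
  have hx_pos : ∀ N : ℕ, 1 ≤ N → 0 < Real.log (M N) / (N:ℝ) :=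
    fun N hN => div_pos (hLpos N) (hNpos N hN)
  have ha1 : ∀ N : ℕ, 1 ≤ N → 0 < (M N) ^ ((1:ℝ)/(N:ℝ)) - 1 := by
    intro N hN
    rw [ha N hN]
    nlinarith [Real.add_one_le_exp (Real.log (M N) / (N:ℝ)), hx_pos N hN]
  have htc_pos : ∀ N : ℕ, 1 ≤ N → 0 < tcf M N := by
    intro N hN
    exact one_div_pos.mpr (ha1 N hN)
  have htc_le : ∀ N : ℕ, 1 ≤ N → tcf M N ≤ (N:ℝ) / Real.log (M N) := by
    intro N hN
    have h1 : Real.log (M N) / (N:ℝ) ≤ (M N) ^ ((1:ℝ)/(N:ℝ)) - 1 := by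
      rw [ha N hN]
      nlinarith [Real.add_one_le_exp (Real.log (M N) / (N:ℝ))]
    have h2 : (1:ℝ) / ((M N) ^ ((1:ℝ)/(N:ℝ)) - 1) ≤ 1 / (Real.log (M N) / (N:ℝ)) :=
      one_div_le_one_div_of_le (hx_pos N hN) h1
    calc tcf M N ≤ 1 / (Real.log (M N) / (N:ℝ)) := h2
      _ = (N:ℝ) / Real.log (M N) := one_div_div _ _
  -- τc / N → 0
  have ht0 : Tendsto (fun N => tcf M N / (N:ℝ)) atTop (nhds 0) := by
    have hub : Tendsto (fun N => 1 / Real.log (M N)) atTop (nhds 0) := by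
      simpa [one_div, Pi.inv_def] using hLtop.inv_tendsto_atTop
    refine tendsto_of_tendsto_of_tendsto_of_le_of_le' tendsto_const_nhds hub ?_ ?_
    · filter_upwards [eventually_ge_atTop 1] with N hN
      exact le_of_lt (div_pos (htc_pos N hN) (hNpos N hN))
    · filter_upwards [eventually_ge_atTop 1] with N hN
      rw [div_le_div_iff₀ (hNpos N hN) (hLpos N)]
      have h := (le_div_iff₀ (hLpos N)).mp (htc_le N hN)
      nlinarith [h]
  -- denominator N + ξ τc → ∞
  have h1 : Tendsto (fun N : ℕ => 1 + ξ * (tcf M N / (N:ℝ))) atTop (nhds 1) := by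
    have : Tendsto (fun N : ℕ => 1 + ξ * (tcf M N / (N:ℝ))) atTop (nhds (1 + ξ * 0)) :=
      tendsto_const_nhds.add (ht0.const_mul ξ)
    simpa using this
  have hd : Tendsto (fun N : ℕ => (N:ℝ) + ξ * tcf M N) atTop atTop := by
    have hcast : Tendsto (fun N : ℕ => (N:ℝ)) atTop atTop := tendsto_natCast_atTop_atTop
    have hmul : Tendsto (fun N : ℕ => (N:ℝ) * (1 + ξ * (tcf M N / (N:ℝ)))) atTop atTop :=
      Tendsto.atTop_mul_pos one_pos hcast h1
    refine hmul.congr' ?_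
    filter_upwards [eventually_ge_atTop 1] with N hN
    have hNne : (N:ℝ) ≠ 0 := ne_of_gt (hNpos N hN)
    field_simp
  have hd_pos : ∀ᶠ N : ℕ in atTop, 0 < (N:ℝ) + ξ * tcf M N := hd.eventually_gt_atTop 0
  have hw0 : Tendsto (wf M ξ) atTop (nhds 0) := by
    have := hd.inv_tendsto_atTop.const_mul ξ
    rw [mul_zero] at this
    exact this.congr fun N => by simp [wf, div_eq_mul_inv]
  have hNw : Tendsto (fun N : ℕ => (N:ℝ) * wf M ξ N) atTop (nhds ξ) := by
    have hbase : Tendsto (fun N : ℕ => ξ / (1 + ξ * (tcf M N / (N:ℝ)))) atTop (nhds ξ) := by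
      have : Tendsto (fun N : ℕ => ξ / (1 + ξ * (tcf M N / (N:ℝ)))) atTop (nhds (ξ / 1)) :=
        tendsto_const_nhds.div h1 one_ne_zero
      simpa using this
    refine hbase.congr' ?_
    filter_upwards [eventually_ge_atTop 1, hd_pos] with N hN hdp
    have hNne : (N:ℝ) ≠ 0 := ne_of_gt (hNpos N hN)
    have hdne : (N:ℝ) + ξ * tcf M N ≠ 0 := ne_of_gt hdp
    rw [wf]
    field_simp
  -- N log(1 + w) → ξ
  have hf : Tendsto (fun N : ℕ => (N:ℝ) * Real.log (1 + wf M ξ N)) atTop (nhds ξ) := by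
    rcases eq_or_ne ξ 0 with h0 | h0
    · subst h0
      simpa [wf] using (tendsto_const_nhds : Tendsto (fun _ : ℕ => (0:ℝ)) atTop (nhds 0))
    · have hwne : ∀ᶠ N : ℕ in atTop, wf M ξ N ∈ ({(0:ℝ)}ᶜ : Set ℝ) := by
        filter_upwards [hd_pos] with N hdp
        simp only [Set.mem_compl_iff, Set.mem_singleton_iff, wf]
        exact div_ne_zero h0 (ne_of_gt hdp)
      have hwmem : Tendsto (wf M ξ) atTop (nhdsWithin 0 {(0:ℝ)}ᶜ) :=
        tendsto_nhdsWithin_of_tendsto_nhds_of_eventually_within _ hw0 hwne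
      have hmul := hNw.mul (aux_log1p.comp hwmem)
      rw [mul_one] at hmul
      refine hmul.congr' ?_
      filter_upwards [hwne] with N hne
      simp only [Set.mem_compl_iff, Set.mem_singleton_iff] at hne
      rw [Function.comp_apply, mul_assoc, mul_div_cancel₀ _ hne]
  -- smallness of the perturbations
  have hE0 : Tendsto (fun N : ℕ => ξ * (1 + tcf M N) / (N:ℝ)) atTop (nhds 0) := by
    have h2 : Tendsto (fun N : ℕ => ξ * ((1:ℝ)/(N:ℝ) + tcf M N / (N:ℝ))) atTop
        (nhds (ξ * (0 + 0))) := (tendsto_one_div_atTop_nhds_zero_nat.add ht0).const_mul ξ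
    simp only [add_zero, mul_zero] at h2
    refine h2.congr fun N => ?_
    rw [mul_div_assoc, add_div]
  have hD0 : Tendsto (fun N : ℕ => ξ * tcf M N / (N:ℝ)) atTop (nhds 0) := by
    have h2 := ht0.const_mul ξ
    simp only [mul_zero] at h2
    refine h2.congr fun N => ?_
    rw [mul_div_assoc]
  have hE1 : ∀ᶠ N : ℕ in atTop, ξ * (1 + tcf M N) / (N:ℝ) ∈ Set.Ioo (-1:ℝ) 1 :=
    hE0.eventually (Ioo_mem_nhds (by norm_num) (by norm_num))
  have hD1 : ∀ᶠ N : ℕ in atTop, ξ * tcf M N / (N:ℝ) ∈ Set.Ioo (-1:ℝ) 1 :=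
    hD0.eventually (Ioo_mem_nhds (by norm_num) (by norm_num))
  -- key eventual identity
  have hkey : ∀ᶠ N : ℕ in atTop,
      0 < qf M ξ N ∧ M N * qf M ξ N = Real.exp ((N:ℝ) * Real.log (1 + wf M ξ N)) := by
    filter_upwards [eventually_ge_atTop 1, hd_pos, hE1, hD1] with N hN hdp hE hD
    have hNr : (0:ℝ) < (N:ℝ) := hNpos N hN
    have hNne : (N:ℝ) ≠ 0 := ne_of_gt hNr
    have htcp : 0 < tcf M N := htc_pos N hN
    have hEpos : 0 < 1 + ξ * (1 + tcf M N) / (N:ℝ) := by have := hE.1; linarith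
    have hDpos : 0 < 1 + ξ * tcf M N / (N:ℝ) := by have := hD.1; linarith
    have hcdef : tcf M N * (Real.exp (Real.log (M N)/(N:ℝ)) - 1) = 1 := by
      rw [tcf, ha N hN]
      have := ha1 N hN
      rw [ha N hN] at this
      field_simp
    have hr : ttf M ξ N / (1 + ttf M ξ N)
        = (1 / Real.exp (Real.log (M N)/(N:ℝ))) * (1 + wf M ξ N) := by
      have := aux_alg (tcf M N) ξ (N:ℝ) (wf M ξ N) (Real.exp (Real.log (M N)/(N:ℝ)))
        htcp hNr hdp hEpos hDpos hcdef (by rw [wf])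
      simpa [ttf] using this
    have hτpos : 0 < ttf M ξ N := by
      rw [ttf]; exact mul_pos htcp hEpos
    have hτ1 : 0 < 1 + ttf M ξ N := by linarith
    have hr_pos : 0 < ttf M ξ N / (1 + ttf M ξ N) := div_pos hτpos hτ1
    have hq_pos : 0 < qf M ξ N := by
      rw [qf]; positivity
    refine ⟨hq_pos, ?_⟩
    have hepos : (0:ℝ) < Real.exp (Real.log (M N)/(N:ℝ)) := Real.exp_pos _
    have hw_pos : 0 < 1 + wf M ξ N := by
      by_contra hcon
      push_neg at hcon
      nlinarith [hr_pos, hr, one_div_pos.mpr hepos]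
    have hlogr : Real.log (ttf M ξ N / (1 + ttf M ξ N))
        = -(Real.log (M N)/(N:ℝ)) + Real.log (1 + wf M ξ N) := by
      rw [hr, Real.log_mul (by positivity) (ne_of_gt hw_pos), one_div,
        Real.log_inv, Real.log_exp]
    have hqexp : qf M ξ N = Real.exp ((N:ℝ) * Real.log (ttf M ξ N / (1 + ttf M ξ N))) := by
      rw [qf, Real.exp_nat_mul, Real.exp_log hr_pos]
    rw [hqexp, hlogr]
    nth_rewrite 1 [← Real.exp_log (hM0 N)]
    rw [← Real.exp_add]
    congr 1
    field_simp
    ring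
  have hq_pos : ∀ᶠ N : ℕ in atTop, 0 < qf M ξ N := hkey.mono fun N h => h.1
  have hMq_eq : ∀ᶠ N : ℕ in atTop,
      M N * qf M ξ N = Real.exp ((N:ℝ) * Real.log (1 + wf M ξ N)) :=
    hkey.mono fun N h => h.2
  -- M q → e^ξ
  have hMq : Tendsto (fun N : ℕ => M N * qf M ξ N) atTop (nhds (Real.exp ξ)) := by
    have hcomp : Tendsto (fun N : ℕ => Real.exp ((N:ℝ) * Real.log (1 + wf M ξ N)))
        atTop (nhds (Real.exp ξ)) := (Real.continuous_exp.tendsto ξ).comp hf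
    exact hcomp.congr' (hMq_eq.mono fun N h => h.symm)
  -- q → 0
  have hq0 : Tendsto (fun N : ℕ => qf M ξ N) atTop (nhds 0) := by
    have hinv : Tendsto (fun N : ℕ => (M N)⁻¹) atTop (nhds 0) := hMtop.inv_tendsto_atTop
    have := hMq.mul hinv
    rw [mul_zero] at this
    refine this.congr fun N => ?_
    rw [mul_comm (M N) (qf M ξ N), mul_assoc, mul_inv_cancel₀ (hMne N), mul_one]
  -- M log(1-q) → -e^ξ
  have hqne : ∀ᶠ N : ℕ in atTop, qf M ξ N ∈ ({(0:ℝ)}ᶜ : Set ℝ) :=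
    hq_pos.mono fun N h => by simp [ne_of_gt h]
  have hqmem : Tendsto (fun N : ℕ => qf M ξ N) atTop (nhdsWithin 0 {(0:ℝ)}ᶜ) :=
    tendsto_nhdsWithin_of_tendsto_nhds_of_eventually_within _ hq0 hqne
  have hlog : Tendsto (fun N : ℕ => M N * Real.log (1 - qf M ξ N)) atTop
      (nhds (-(Real.exp ξ))) := by
    have hmul := hMq.mul (aux_log1m.comp hqmem)
    rw [mul_neg_one] at hmul
    refine hmul.congr' ?_
    filter_upwards [hq_pos] with N h
    rw [Function.comp_apply, mul_assoc, mul_div_cancel₀ _ (ne_of_gt h)]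
  have hq_lt1 : ∀ᶠ N : ℕ in atTop, qf M ξ N < 1 :=
    hq0.eventually (gt_mem_nhds (by norm_num))
  -- final assembly
  have hfin : Tendsto (fun N : ℕ => 1 - (1 - qf M ξ N) ^ (M N)) atTop
      (nhds (1 - Real.exp (-Real.exp ξ))) := by
    have h1 : Tendsto (fun N : ℕ => Real.exp (Real.log (1 - qf M ξ N) * M N)) atTop
        (nhds (Real.exp (-Real.exp ξ))) := by
      refine (Real.continuous_exp.tendsto _).comp ?_
      refine hlog.congr fun N => ?_
      ring
    have h2 : Tendsto (fun N : ℕ => (1 - qf M ξ N) ^ (M N)) atTop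
        (nhds (Real.exp (-Real.exp ξ))) := by
      refine h1.congr' ?_
      filter_upwards [hq_lt1] with N h
      rw [Real.rpow_def_of_pos (by linarith)]
    exact tendsto_const_nhds.sub h2
  exact hfin
end

section
/- Let M > 1 be constant, τ_c(N) = 1/(M^{1/N} − 1), and fix ξ > 0. Then p_M(ξ·τ_c(N)) = 1 − (1 − (ξτ_c(N)/(1+ξτ_c(N)))^N)^M converges to 1 − (1 − e^{−log(M)/ξ})^M as N → ∞. -/
open Real Filter

theorem stmt_8 (M : ℝ) (hM : 1 < M) (ξ : ℝ) (hξ : 0 < ξ) :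
    Filter.Tendsto
      (fun N : ℕ =>
        let τc : ℝ := 1 / (M ^ ((1 : ℝ) / N) - 1)
        1 - (1 - (ξ * τc / (1 + ξ * τc)) ^ N) ^ M)
      Filter.atTop
      (nhds (1 - (1 - Real.exp (-Real.log M / ξ)) ^ M)) := by
  have hM0 : (0:ℝ) < M := lt_trans one_pos hM
  set L := Real.log M with hLdef
  have hL0 : 0 < L := Real.log_pos hM
  set f : ℝ → ℝ := fun t => Real.log (1 + (Real.exp (t * L) - 1) / ξ) with hf
  -- derivative of f at 0 is L / ξ
  have hfd : HasDerivAt f (L / ξ) 0 := by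
    have h0 : HasDerivAt (fun t : ℝ => Real.exp (t * L)) L 0 := by
      have := ((hasDerivAt_id (0:ℝ)).mul_const L).exp
      simpa using this
    have h1 : HasDerivAt (fun t : ℝ => 1 + (Real.exp (t * L) - 1) / ξ) (L / ξ) 0 :=
      ((h0.sub_const 1).div_const ξ).const_add 1
    have h2 := h1.log (by norm_num)
    simpa using h2
  -- slope tendsto
  have hslope : Tendsto (fun x : ℝ => f x / x) (nhdsWithin 0 {(0:ℝ)}ᶜ) (nhds (L / ξ)) := by
    have := hasDerivAt_iff_tendsto_slope.mp hfd
    refine this.congr' ?_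
    filter_upwards [self_mem_nhdsWithin] with x hx
    simp [slope_def_field, hf, Real.log_one]
  -- sequence 1/N tends to 0 within ≠ 0
  have hseq : Tendsto (fun N : ℕ => (1:ℝ) / N) atTop (nhdsWithin 0 {(0:ℝ)}ᶜ) := by
    rw [tendsto_nhdsWithin_iff]
    refine ⟨tendsto_one_div_atTop_nhds_zero_nat, ?_⟩
    filter_upwards [eventually_ge_atTop 1] with N hN
    have : (0:ℝ) < (N:ℝ) := by exact_mod_cast Nat.pos_of_ne_zero (by omega)
    simpa using one_div_ne_zero (ne_of_gt this)
  have hmain : Tendsto (fun N : ℕ => f ((1:ℝ)/N) / ((1:ℝ)/N)) atTop (nhds (L / ξ)) :=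
    hslope.comp hseq
  have hexp : Tendsto (fun N : ℕ => Real.exp (-(f ((1:ℝ)/N) / ((1:ℝ)/N)))) atTop
      (nhds (Real.exp (-(L / ξ)))) :=
    (Real.continuous_exp.tendsto _).comp hmain.neg
  -- continuity of x ↦ 1 - (1-x)^M at exp(-(L/ξ))
  have he1 : Real.exp (-(L / ξ)) < 1 := by
    rw [Real.exp_lt_one_iff]
    exact neg_neg_iff_pos.mpr (div_pos hL0 hξ)
  have hbase : (0:ℝ) < 1 - Real.exp (-(L / ξ)) := by linarith
  have hcont : ContinuousAt (fun x : ℝ => 1 - (1 - x) ^ M) (Real.exp (-(L / ξ))) := by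
    have h1 : ContinuousAt (fun x : ℝ => (1 - x) ^ M) (Real.exp (-(L / ξ))) :=
      ContinuousAt.rpow_const (continuousAt_const.sub continuousAt_id)
        (Or.inl (ne_of_gt hbase))
    exact continuousAt_const.sub h1
  have hcomp := hcont.tendsto.comp hexp
  have hEq : -Real.log M / ξ = -(L / ξ) := by rw [hLdef]; ring
  rw [hEq]
  refine hcomp.congr' ?_
  filter_upwards [eventually_ge_atTop 1] with N hN
  have hNpos : (0:ℝ) < (N:ℝ) := by exact_mod_cast Nat.pos_of_ne_zero (by omega)
  set a : ℝ := Real.exp ((1/N : ℝ) * L) - 1 with ha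
  have hMN : M ^ ((1:ℝ)/N) = Real.exp ((1/N : ℝ) * L) := by
    rw [Real.rpow_def_of_pos hM0, mul_comm]
  have ha0 : 0 < a := by
    have h1 : (1:ℝ) < Real.exp ((1/N:ℝ) * L) := by
      have := Real.exp_lt_exp.mpr (mul_pos (one_div_pos.mpr hNpos) hL0)
      simpa using this
    simp only [ha]; linarith
  have hb0 : (0:ℝ) < 1 + a/ξ := by positivity
  have key : Real.exp (-(f ((1:ℝ)/N) / ((1:ℝ)/N))) = (ξ * (1/a) / (1 + ξ * (1/a))) ^ N := by
    have hfN : f ((1:ℝ)/N) = Real.log (1 + a/ξ) := rfl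
    have h1 : Real.log (1 + a/ξ) / ((1:ℝ)/N) = (N:ℝ) * Real.log (1 + a/ξ) := by
      rw [div_eq_mul_inv, one_div, inv_inv, mul_comm]
    rw [hfN, h1, Real.exp_neg, Real.exp_nat_mul, Real.exp_log hb0, ← inv_pow]
    congr 1
    have h2 : (1 + a/ξ) = (ξ + a)/ξ := by field_simp
    have h3 : ξ * (1/a) / (1 + ξ * (1/a)) = ξ / (ξ + a) := by
      have h : ξ + a ≠ 0 := by positivity
      field_simp
      ring
    rw [h2, h3, inv_div]
  show 1 - (1 - Real.exp (-(f ((1:ℝ)/N) / ((1:ℝ)/N)))) ^ M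
      = 1 - (1 - (ξ * (1/(M ^ ((1:ℝ)/N) - 1)) / (1 + ξ * (1/(M ^ ((1:ℝ)/N) - 1)))) ^ N) ^ M
  rw [key, hMN]
end

section
/- Suppose M(N) → ∞ and log(M(N))/N → b > 0 as N → ∞, and τ_N = τ_c(N)(1 + ξ(1+τ_c(N))/N) with τ_c(N) = 1/(M(N)^{1/N} − 1) and ξ ∈ ℝ fixed. Then M(N)·(τ_N/(1+τ_N))^N → e^ξ as N → ∞, and consequently the binomial random variable X_M counting responses in M(N) independent trials with success probability (τ_N/(1+τ_N))^N converges in distribution to a Poisson random variable with parameter e^ξ. -/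
open Filter Real Topology Finset

lemma aux_pow (f : ℕ → ℕ) (hf : Tendsto (fun n => (f n : ℝ)) atTop atTop)
    (u : ℕ → ℝ) (c : ℝ) (hu : Tendsto (fun n => (f n : ℝ) * u n) atTop (𝓝 c)) :
    Tendsto (fun n => (1 + u n) ^ (f n)) atTop (𝓝 (Real.exp c)) := by
  have hfpos : ∀ᶠ n in atTop, (0:ℝ) < f n := hf.eventually_gt_atTop 0
  have hu0 : Tendsto u atTop (𝓝 0) := by
    have := hu.mul (hf.inv_tendsto_atTop)
    rw [mul_zero] at this
    refine this.congr' ?_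
    filter_upwards [hfpos] with n hn
    simp only [Pi.inv_apply]
    field_simp
  have hsmall : ∀ᶠ n in atTop, |u n| < 1/2 := by
    have := hu0.eventually (eventually_abs_sub_lt 0 (by norm_num : (0:ℝ) < 1/2))
    simpa using this
  have hkey : Tendsto (fun n => (f n : ℝ) * Real.log (1 + u n)) atTop (𝓝 c) := by
    have hlow : Tendsto (fun n => ((f n : ℝ) * u n) * (1 + u n)⁻¹) atTop (𝓝 c) := by
      have : Tendsto (fun n => (1 + u n)⁻¹) atTop (𝓝 1) := by
        have h1 : Tendsto (fun n => 1 + u n) atTop (𝓝 1) := by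
          simpa using (tendsto_const_nhds.add hu0)
        simpa using h1.inv₀ (by norm_num)
      simpa using hu.mul this
    refine tendsto_of_tendsto_of_tendsto_of_le_of_le' hlow hu ?_ ?_
    · filter_upwards [hsmall, hfpos] with n hs hp
      have h1u : (0:ℝ) < 1 + u n := by
        have := abs_lt.1 hs
        linarith [this.1]
      have hlog : 1 - (1 + u n)⁻¹ ≤ Real.log (1 + u n) := by
        have := Real.log_le_sub_one_of_pos (inv_pos.2 h1u)
        rw [Real.log_inv] at this
        linarith
      have : u n * (1 + u n)⁻¹ ≤ Real.log (1 + u n) := by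
        have heq : u n * (1 + u n)⁻¹ = 1 - (1 + u n)⁻¹ := by
          field_simp
          ring
        rw [heq]; exact hlog
      calc (f n : ℝ) * u n * (1 + u n)⁻¹ = (f n : ℝ) * (u n * (1 + u n)⁻¹) := by ring
        _ ≤ (f n : ℝ) * Real.log (1 + u n) := by
          exact mul_le_mul_of_nonneg_left this (le_of_lt hp)
    · filter_upwards [hsmall, hfpos] with n hs hp
      have h1u : (0:ℝ) < 1 + u n := by
        have := abs_lt.1 hs
        linarith [this.1]
      have hlog : Real.log (1 + u n) ≤ u n := by
        have := Real.log_le_sub_one_of_pos h1u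
        linarith
      exact mul_le_mul_of_nonneg_left hlog (le_of_lt hp)
  have := (Real.continuous_exp.tendsto c).comp hkey
  refine this.congr' ?_
  filter_upwards [hsmall] with n hs
  have h1u : (0:ℝ) < 1 + u n := by
    have := abs_lt.1 hs
    linarith [this.1]
  simp only [Function.comp_apply]
  rw [Real.exp_nat_mul, Real.exp_log h1u]

theorem stmt_16 (M : ℕ → ℕ) (hM : ∀ N, 1 < M N)
    (hMtop : Filter.Tendsto (fun N : ℕ => (M N : ℝ)) Filter.atTop Filter.atTop)
    (b : ℝ) (hb : 0 < b)
    (hlog : Filter.Tendsto (fun N : ℕ => Real.log (M N) / N) Filter.atTop (nhds b))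
    (ξ : ℝ)
    (τ : ℕ → ℝ)
    (hτ : ∀ N : ℕ, τ N =
      (1 / ((M N : ℝ) ^ ((1 : ℝ) / N) - 1)) *
        (1 + ξ * (1 + 1 / ((M N : ℝ) ^ ((1 : ℝ) / N) - 1)) / N)) :
    Filter.Tendsto (fun N : ℕ => (M N : ℝ) * (τ N / (1 + τ N)) ^ N)
      Filter.atTop (nhds (Real.exp ξ)) ∧
    ∀ k : ℕ,
      Filter.Tendsto
        (fun N : ℕ => (Nat.choose (M N) k : ℝ) * ((τ N / (1 + τ N)) ^ N) ^ k *
          (1 - (τ N / (1 + τ N)) ^ N) ^ (M N - k))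
        Filter.atTop
        (nhds (Real.exp (-Real.exp ξ) * (Real.exp ξ) ^ k / (Nat.factorial k : ℝ))) := by
  set a : ℕ → ℝ := fun N => (M N : ℝ) ^ ((1 : ℝ) / N) with ha_def
  set ε : ℕ → ℝ := fun N => ξ * (1 + 1 / (a N - 1)) / N with hε_def
  have hMpos : ∀ N, (0:ℝ) < M N := fun N => by exact_mod_cast (Nat.lt_of_lt_of_le Nat.zero_lt_one (hM N).le)
  -- a N > 1 for N ≥ 1
  have ha1 : ∀ N : ℕ, 1 ≤ N → 1 < a N := by
    intro N hN
    have : (1:ℝ) < M N := by exact_mod_cast hM N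
    rw [ha_def]
    rw [Real.one_lt_rpow_iff_of_pos (hMpos N)]
    left
    exact ⟨this, by positivity⟩
  -- a N ^ N = M N for N ≥ 1
  have haN : ∀ N : ℕ, 1 ≤ N → (a N) ^ N = (M N : ℝ) := by
    intro N hN
    rw [ha_def, ← Real.rpow_natCast ((M N : ℝ) ^ ((1:ℝ)/N)) N, ← Real.rpow_mul (hMpos N).le]
    rw [one_div, inv_mul_cancel₀ (Nat.cast_ne_zero.mpr (by omega) : (N:ℝ) ≠ 0), Real.rpow_one]
  -- a → exp b
  have ha_lim : Tendsto a atTop (𝓝 (Real.exp b)) := by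
    have h : ∀ N : ℕ, a N = Real.exp (Real.log (M N) / N) := by
      intro N
      show (M N : ℝ) ^ ((1:ℝ)/N) = _
      rw [Real.rpow_def_of_pos (hMpos N), mul_one_div]
    exact ((Real.continuous_exp.tendsto b).comp hlog).congr (fun N => (h N).symm)
  have hexpb : 1 < Real.exp b := by
    rw [Real.one_lt_exp_iff]; exact hb
  -- ε → 0
  have hε_lim : Tendsto ε atTop (𝓝 0) := by
    have h1 : Tendsto (fun N => ξ * (1 + 1 / (a N - 1))) atTop
        (𝓝 (ξ * (1 + 1 / (Real.exp b - 1)))) := by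
      refine tendsto_const_nhds.mul (tendsto_const_nhds.add ?_)
      exact tendsto_const_nhds.div (ha_lim.sub tendsto_const_nhds) (by linarith)
    have h2 := h1.mul tendsto_one_div_atTop_nhds_zero_nat
    rw [mul_zero] at h2
    refine h2.congr ?_
    intro N
    rw [hε_def]
    ring
  -- eventually facts
  have hev : ∀ᶠ N in atTop, 1 ≤ N ∧ 1 < a N ∧ |ε N| < 1/2 := by
    have h2 := hε_lim.eventually (eventually_abs_sub_lt 0 (by norm_num : (0:ℝ) < 1/2))
    filter_upwards [eventually_ge_atTop 1, h2] with N h1 h2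
    refine ⟨h1, ha1 N h1, by simpa using h2⟩
  set δ : ℕ → ℝ := fun N => ε N * (a N - 1) / (a N + ε N) with hδ_def
  -- N * δ N → ξ
  have hNδ : Tendsto (fun N : ℕ => (N : ℝ) * δ N) atTop (𝓝 ξ) := by
    have hd : Tendsto (fun N => a N / (a N + ε N)) atTop (𝓝 1) := by
      have := ha_lim.div (ha_lim.add hε_lim) (by
        rw [add_zero]; exact (Real.exp_pos b).ne')
      rwa [add_zero, div_self (Real.exp_ne_zero b)] at this
    have hlim : Tendsto (fun N => ξ * (a N / (a N + ε N))) atTop (𝓝 ξ) := by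
      have := hd.const_mul ξ
      rwa [mul_one] at this
    refine hlim.congr' ?_
    filter_upwards [hev] with N ⟨h1, h2, h3⟩
    have hN0 : (N:ℝ) ≠ 0 := Nat.cast_ne_zero.mpr (by omega)
    have ha0 : a N - 1 ≠ 0 := by linarith
    have hNε : (N:ℝ) * ε N * (a N - 1) = ξ * a N := by
      simp only [hε_def]
      field_simp
      ring
    have hrw : (N:ℝ) * δ N = ((N:ℝ) * ε N * (a N - 1)) / (a N + ε N) := by
      simp only [hδ_def]; ring
    rw [hrw, hNε, mul_div_assoc]
  -- key identity
  have hkey : ∀ᶠ N in atTop, (M N : ℝ) * (τ N / (1 + τ N)) ^ N = (1 + δ N) ^ N := by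
    filter_upwards [hev] with N ⟨h1, h2, h3⟩
    have ha0 : a N - 1 ≠ 0 := by linarith
    have haε : 0 < a N + ε N := by
      have := abs_lt.1 h3
      linarith [this.1]
    have hN0 : (N:ℝ) ≠ 0 := Nat.cast_ne_zero.mpr (by omega)
    have hτN : τ N = (1 + ε N) / (a N - 1) := by
      rw [hτ N]
      simp only [hε_def, ha_def]
      field_simp
    have h1τ : 1 + τ N = (a N + ε N) / (a N - 1) := by
      rw [hτN]; field_simp; ring
    have hfrac : τ N / (1 + τ N) = (1 + ε N) / (a N + ε N) := by
      rw [h1τ, hτN]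
      rw [div_div_div_eq, div_eq_div_iff (by positivity) (by positivity)]
      ring
    rw [hfrac, ← haN N h1, div_pow, ← mul_div_assoc, ← mul_pow]
    rw [hδ_def]
    rw [← div_pow]
    congr 1
    field_simp
    ring
  have part1 : Tendsto (fun N : ℕ => (M N : ℝ) * (τ N / (1 + τ N)) ^ N) atTop
      (𝓝 (Real.exp ξ)) := by
    have := aux_pow (fun n => n) tendsto_natCast_atTop_atTop δ ξ hNδ
    exact (this.congr' (by filter_upwards [hkey] with N h; exact h.symm)).mono_left le_rfl
  refine ⟨part1, ?_⟩
  intro k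
  set p : ℕ → ℝ := fun N => (τ N / (1 + τ N)) ^ N with hp_def
  set L : ℝ := Real.exp ξ with hL_def
  have hL0 : 0 < L := Real.exp_pos ξ
  have hlam : Tendsto (fun N => (M N : ℝ) * p N) atTop (𝓝 L) := part1
  have hp0 : Tendsto p atTop (𝓝 0) := by
    have := hlam.mul hMtop.inv_tendsto_atTop
    rw [mul_zero] at this
    refine this.congr ?_
    intro N
    have : (M N : ℝ) ≠ 0 := (hMpos N).ne'
    simp only [Pi.inv_apply]
    field_simp
  have hplt : ∀ᶠ N in atTop, p N < 1/2 :=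
    hp0.eventually (eventually_lt_nhds (by norm_num : (0:ℝ) < 1/2))
  have hMk : ∀ᶠ N in atTop, (k:ℝ) ≤ (M N : ℝ) := hMtop.eventually_ge_atTop (k:ℝ)
  -- product part
  have hA : Tendsto (fun N => ∏ i ∈ Finset.range k, (((M N : ℝ) - i) * p N)) atTop
      (𝓝 (L ^ k)) := by
    have : (L : ℝ) ^ k = ∏ i ∈ Finset.range k, L := by
      rw [Finset.prod_const, Finset.card_range]
    rw [this]
    refine tendsto_finset_prod _ (fun i _ => ?_)
    have h1 : Tendsto (fun N => (M N : ℝ) * p N - (i:ℝ) * p N) atTop (𝓝 (L - (i:ℝ) * 0)) :=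
      hlam.sub (tendsto_const_nhds.mul hp0)
    rw [mul_zero, sub_zero] at h1
    refine h1.congr (fun N => ?_)
    ring
  have hchoose : ∀ᶠ N in atTop, (Nat.choose (M N) k : ℝ) * (p N) ^ k =
      (∏ i ∈ Finset.range k, (((M N : ℝ) - i) * p N)) / (Nat.factorial k : ℝ) := by
    filter_upwards [hMk] with N hN
    have hkM : k ≤ M N := by exact_mod_cast hN
    have hdesc : ((M N).descFactorial k : ℝ) = ∏ i ∈ Finset.range k, ((M N : ℝ) - i) := by
      rw [Nat.descFactorial_eq_prod_range]
      push_cast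
      refine Finset.prod_congr rfl (fun i hi => ?_)
      rw [Nat.cast_sub (le_trans (Finset.mem_range.mp hi).le hkM)]
    have h1 : ((Nat.factorial k : ℝ)) * (Nat.choose (M N) k : ℝ) =
        ∏ i ∈ Finset.range k, ((M N : ℝ) - i) := by
      rw [← hdesc, ← Nat.cast_mul, Nat.descFactorial_eq_factorial_mul_choose]
    rw [Finset.prod_mul_distrib, Finset.prod_const, Finset.card_range, ← h1]
    field_simp
  have hB : Tendsto (fun N => (1 - p N) ^ (M N - k)) atTop (𝓝 (Real.exp (-L))) := by
    have hBM : Tendsto (fun N => (1 - p N) ^ (M N)) atTop (𝓝 (Real.exp (-L))) := by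
      have := aux_pow M hMtop (fun N => -(p N)) (-L) (by
        have := hlam.neg
        refine this.congr (fun N => ?_)
        ring)
      refine this.congr (fun N => ?_)
      ring_nf
    have hBk : Tendsto (fun N => ((1 - p N) ^ k)⁻¹) atTop (𝓝 1) := by
      have h1 : Tendsto (fun N => (1 - p N) ^ k) atTop (𝓝 1) := by
        have h0 : Tendsto (fun N => (1:ℝ) - p N) atTop (𝓝 (1 - 0)) :=
          (tendsto_const_nhds (x := (1:ℝ))).sub hp0
        rw [sub_zero] at h0
        simpa using h0.pow k
      have := h1.inv₀ (by norm_num)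
      simpa using this
    have := hBM.mul hBk
    rw [mul_one] at this
    refine this.congr' ?_
    filter_upwards [hplt, hMtop.eventually_ge_atTop (k:ℝ)] with N h1 h2
    have hkM : k ≤ M N := by exact_mod_cast h2
    have hne : (1 - p N) ≠ 0 := by
      intro h
      have : p N = 1 := by linarith
      linarith
    rw [← pow_sub₀ _ hne hkM]
  have hfinal := (hA.div_const (Nat.factorial k : ℝ)).mul hB
  have heq : L ^ k / (Nat.factorial k : ℝ) * Real.exp (-L) =
      Real.exp (-L) * L ^ k / (Nat.factorial k : ℝ) := by ring
  rw [heq] at hfinal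
  refine hfinal.congr' ?_
  filter_upwards [hchoose] with N h
  rw [← h]
end
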